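/- arXiv:1503.04652 — 3 statements merged into one kernel-verified Lean document; each statement's English description precedes it below -/
import Mathlib

section
/- Let 1 ≤ p < ∞ and 1 ≤ r ≤ ∞. If F : [0,∞) → [0,∞) is locally absolutely continuous with F ∈ Lᵖ([0,∞)), G : [0,∞) → ℝ with G ∈ Lʳ([0,∞)), and (d/dt)F(t) ≤ G(t) for almost every t ≥ 0, then lim_{t→∞} F(t) = 0. -/
open MeasureTheory Filter Set IsUnifLocDoublingMeasure
open scoped ENNReal Topology

lemma aux_ae_eq_deriv (t : ℝ) (F F' y : ℝ → ℝ)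
    (hy : IntegrableOn y (Set.Icc 0 t) volume)
    (hFeq : ∀ u ∈ Set.Icc (0:ℝ) t, F u = F 0 + ∫ s in (0:ℝ)..u, y s) :
    ∀ᵐ x ∂(volume : Measure ℝ),
      x ∈ Set.Ico (0:ℝ) t → HasDerivAt F (F' x) x → y x = F' x := by
  set yb : ℝ → ℝ := (Set.Icc (0:ℝ) t).indicator y with hyb
  have hybint : Integrable yb volume := hy.integrable_indicator measurableSet_Icc
  have hloc : LocallyIntegrable yb volume := hybint.locallyIntegrable
  filter_upwards [(vitaliFamily (volume : Measure ℝ) 1).ae_tendsto_average hloc]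
    with x hx hxmem hxder
  have hxt : x < t := hxmem.2
  have hx0 : (0:ℝ) ≤ x := hxmem.1
  -- average limit along right intervals
  have havg : Tendsto (fun b' => ⨍ u in Icc x b', yb u) (𝓝[>] x) (𝓝 (yb x)) :=
    hx.comp (Real.tendsto_Icc_vitaliFamily_right x)
  -- slope limit
  have hslope : Tendsto (fun b' => (b' - x)⁻¹ • (F b' - F x)) (𝓝[>] x) (𝓝 (F' x)) := by
    have := hxder.hasDerivWithinAt (s := Set.Ioi x)
    have h := (hasDerivWithinAt_iff_tendsto_slope.mp this)
    have hsub : 𝓝[Set.Ioi x \ {x}] x = 𝓝[>] x := by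
      congr 1
      rw [Set.diff_singleton_eq_self (by simp)]
    exact hsub ▸ (by simpa [slope_fun_def_field, div_eq_inv_mul] using h)
  -- eventually the two sequences agree
  have hev : ∀ᶠ b' in 𝓝[>] x, ⨍ u in Icc x b', yb u = (b' - x)⁻¹ • (F b' - F x) := by
    filter_upwards [Ioc_mem_nhdsGT hxt]
      with b' hb'
    have hxb' : x < b' := hb'.1
    have hb't : b' ≤ t := hb'.2
    have hsub : Set.Icc x b' ⊆ Set.Icc 0 t := Set.Icc_subset_Icc hx0 hb't
    have h1 : ∫ u in Set.Icc x b', yb u = ∫ u in Set.Icc x b', y u := by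
      refine setIntegral_congr_fun measurableSet_Icc fun u hu => ?_
      exact Set.indicator_of_mem (hsub hu) y
    have h2 : ∫ u in Set.Icc x b', y u = F b' - F x := by
      rw [MeasureTheory.integral_Icc_eq_integral_Ioc,
        ← intervalIntegral.integral_of_le hxb'.le]
      have hFx := hFeq x ⟨hx0, hxt.le⟩
      have hFb' := hFeq b' ⟨hx0.trans hxb'.le, hb't⟩
      have hi1 : IntervalIntegrable y volume 0 b' := by
        apply IntegrableOn.intervalIntegrable
        rw [Set.uIcc_of_le (hx0.trans hxb'.le)]
        exact hy.mono_set (Set.Icc_subset_Icc_right hb't)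
      have hi2 : IntervalIntegrable y volume 0 x := by
        apply IntegrableOn.intervalIntegrable
        rw [Set.uIcc_of_le hx0]
        exact hy.mono_set (Set.Icc_subset_Icc_right hxt.le)
      rw [hFb', hFx]
      rw [add_sub_add_left_eq_sub, intervalIntegral.integral_interval_sub_left hi1 hi2]
    rw [MeasureTheory.setAverage_eq, h1, h2, Real.volume_real_Icc_of_le hxb'.le]
  have : Tendsto (fun b' => (b' - x)⁻¹ • (F b' - F x)) (𝓝[>] x) (𝓝 (yb x)) :=
    havg.congr' hev
  have hyx : yb x = F' x := tendsto_nhds_unique this hslope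
  rw [← hyx]
  show y x = (Set.Icc (0:ℝ) t).indicator y x
  exact (Set.indicator_of_mem (s := Set.Icc (0:ℝ) t) (a := x) ⟨hx0, hxt.le⟩ y).symm

lemma aux_tail_small (f : ℝ → ℝ) (hf : IntegrableOn f (Set.Ici 0) volume)
    (_h0 : ∀ u, 0 ≤ f u) {ε : ℝ} (hε : 0 < ε) :
    ∃ T : ℝ, 0 ≤ T ∧ ∫ u in Set.Ioi T, f u ≤ ε := by
  have hU : (⋃ n : ℕ, Set.Icc (0:ℝ) n) = Set.Ici 0 := by
    ext x
    simp only [Set.mem_iUnion, Set.mem_Icc, Set.mem_Ici]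
    constructor
    · rintro ⟨n, h, _⟩; exact h
    · intro hx
      obtain ⟨n, hn⟩ := exists_nat_ge x
      exact ⟨n, hx, hn⟩
  have hmono : Monotone fun n : ℕ => Set.Icc (0:ℝ) n := fun m n hmn =>
    Set.Icc_subset_Icc_right (by exact_mod_cast hmn)
  have htend := MeasureTheory.tendsto_setIntegral_of_monotone
    (fun n : ℕ => measurableSet_Icc) hmono (by rw [hU]; exact hf)
  rw [hU] at htend
  rw [Metric.tendsto_atTop] at htend
  obtain ⟨N, hN⟩ := htend ε hε
  refine ⟨N, Nat.cast_nonneg N, ?_⟩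
  have hsplit : ∫ u in Set.Ici (0:ℝ), f u
      = (∫ u in Set.Icc (0:ℝ) N, f u) + ∫ u in Set.Ioi (N:ℝ), f u := by
    rw [← MeasureTheory.setIntegral_union]
    · congr 1
      rw [Set.Icc_union_Ioi_eq_Ici (Nat.cast_nonneg N)]
    · exact Set.disjoint_left.mpr fun x hx hx' => absurd hx.2 (not_le.mpr hx')
    · exact measurableSet_Ioi
    · exact hf.mono_set (Set.Icc_subset_Ici_self)
    · exact hf.mono_set fun x hx => show (0:ℝ) ≤ x from (Nat.cast_nonneg N).trans (le_of_lt hx)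
  have := hN N le_rfl
  rw [Real.dist_eq] at this
  obtain ⟨ha, hb⟩ := abs_lt.mp this
  linarith [hsplit]
lemma aux_holder (r : ℝ≥0∞) (hr : 1 < r) (g : ℝ → ℝ)
    (hg : MemLp g r (volume.restrict (Set.Ici 0))) {ε : ℝ} (hε : 0 < ε) :
    ∃ δ : ℝ, 0 < δ ∧ δ ≤ 1 ∧ ∀ s t : ℝ, 0 ≤ s → s ≤ t → t ≤ s + δ →
      ∫ u in Set.Ioc s t, g u ≤ ε := by
  set B := eLpNorm g r (volume.restrict (Set.Ici 0)) with hB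
  have hBlt : B < ∞ := hg.2
  set θ : ℝ := 1 - 1 / r.toReal with hθdef
  have hθ : 0 < θ := by
    rcases eq_or_ne r ∞ with hrtop | hrtop
    · simp [hθdef, hrtop]
    · have h1 : 1 < r.toReal := by
        rw [← ENNReal.toReal_one]
        exact (ENNReal.toReal_lt_toReal (by simp) hrtop).mpr hr
      have : 1 / r.toReal < 1 := by
        rw [div_lt_one (by linarith)]; linarith
      rw [hθdef]; linarith
  -- choose δ
  have htends : Tendsto (fun d : ℝ => B.toReal * d ^ θ) (𝓝[>] 0) (𝓝 0) := by
    have h1 : Tendsto (fun d : ℝ => d ^ θ) (𝓝 0) (𝓝 0) := by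
      have := (Real.continuousAt_rpow_const 0 θ (Or.inr hθ.le)).tendsto
      simpa [Real.zero_rpow hθ.ne'] using this
    have := (h1.const_mul B.toReal).mono_left (nhdsWithin_le_nhds (s := Set.Ioi (0:ℝ)))
    simpa using this
  have hev : ∀ᶠ d in 𝓝[>] (0:ℝ), B.toReal * d ^ θ ≤ ε ∧ 0 < d ∧ d ≤ 1 := by
    have h1 : ∀ᶠ d in 𝓝[>] (0:ℝ), B.toReal * d ^ θ ≤ ε := by
      filter_upwards [htends (Metric.ball_mem_nhds 0 hε)] with d hd
      simp only [Set.mem_preimage, Metric.mem_ball, Real.dist_eq, sub_zero] at hd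
      exact (le_abs_self _).trans hd.le
    have h2 : ∀ᶠ d in 𝓝[>] (0:ℝ), 0 < d ∧ d ≤ 1 := by
      filter_upwards [Ioc_mem_nhdsGT (by norm_num : (0:ℝ) < 1)] with d hd
      exact ⟨hd.1, hd.2⟩
    exact h1.and h2
  obtain ⟨δ, hδε, hδ0, hδ1⟩ := hev.exists
  refine ⟨δ, hδ0, hδ1, fun s t hs hst htδ => ?_⟩
  -- the restricted measure
  have hres : (volume.restrict (Set.Ici (0:ℝ))).restrict (Set.Ioc s t)
      = volume.restrict (Set.Ioc s t) := by
    rw [Measure.restrict_restrict measurableSet_Ioc]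
    congr 1
    exact Set.inter_eq_left.mpr fun x hx => hs.trans hx.1.le
  have hgA : MemLp g r (volume.restrict (Set.Ioc s t)) := by
    rw [← hres]; exact hg.restrict _
  have hfin : IsFiniteMeasure (volume.restrict (Set.Ioc s t)) := by
    constructor
    rw [Measure.restrict_apply_univ, Real.volume_Ioc]
    exact ENNReal.ofReal_lt_top
  have hgint : Integrable g (volume.restrict (Set.Ioc s t)) :=
    memLp_one_iff_integrable.mp (hgA.mono_exponent (le_of_lt hr))
  -- Hölder
  have hH : eLpNorm g 1 (volume.restrict (Set.Ioc s t))
      ≤ B * ENNReal.ofReal δ ^ θ := by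
    have h1 := eLpNorm_le_eLpNorm_mul_rpow_measure_univ (p := 1) (q := r)
      (le_of_lt hr) hgA.1
    have h2 : eLpNorm g r (volume.restrict (Set.Ioc s t)) ≤ B := by
      rw [hB, ← hres]
      exact eLpNorm_mono_measure g Measure.restrict_le_self
    have h3 : (volume.restrict (Set.Ioc s t)) Set.univ ≤ ENNReal.ofReal δ := by
      rw [Measure.restrict_apply_univ, Real.volume_Ioc]
      exact ENNReal.ofReal_le_ofReal (by linarith)
    calc eLpNorm g 1 (volume.restrict (Set.Ioc s t))
        ≤ eLpNorm g r (volume.restrict (Set.Ioc s t))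
          * (volume.restrict (Set.Ioc s t)) Set.univ ^ (1 / (1:ℝ≥0∞).toReal - 1 / r.toReal) := h1
      _ ≤ B * ENNReal.ofReal δ ^ θ := by
          refine mul_le_mul' h2 ?_
          have : (1 / (1:ℝ≥0∞).toReal - 1 / r.toReal) = θ := by
            simp [hθdef]
          rw [this]
          exact ENNReal.rpow_le_rpow h3 hθ.le
  -- convert to real integrals
  have habs : ∫ u in Set.Ioc s t, g u ≤ ∫ u in Set.Ioc s t, |g u| := by
    refine le_trans (le_abs_self _) ?_
    rw [← Real.norm_eq_abs]
    refine le_trans (norm_integral_le_integral_norm g) (le_of_eq ?_)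
    simp [Real.norm_eq_abs]
  have heq : ENNReal.ofReal (∫ u in Set.Ioc s t, ‖g u‖)
      = eLpNorm g 1 (volume.restrict (Set.Ioc s t)) := by
    rw [eLpNorm_one_eq_lintegral_enorm]
    exact ofReal_integral_norm_eq_lintegral_enorm hgint
  have hnorm : ∫ u in Set.Ioc s t, |g u| = (eLpNorm g 1 (volume.restrict (Set.Ioc s t))).toReal := by
    rw [← heq, ENNReal.toReal_ofReal (by positivity)]
    simp [Real.norm_eq_abs]
  have hfinal : (eLpNorm g 1 (volume.restrict (Set.Ioc s t))).toReal
      ≤ B.toReal * δ ^ θ := by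
    have hne : B * ENNReal.ofReal δ ^ θ ≠ ∞ := by
      exact ENNReal.mul_ne_top hBlt.ne (by
        exact (ENNReal.rpow_lt_top_of_nonneg hθ.le ENNReal.ofReal_ne_top).ne)
    refine le_trans (ENNReal.toReal_mono hne hH) (le_of_eq ?_)
    rw [ENNReal.toReal_mul, ← ENNReal.toReal_rpow, ENNReal.toReal_ofReal hδ0.le]
  calc ∫ u in Set.Ioc s t, g u ≤ ∫ u in Set.Ioc s t, |g u| := habs
    _ = (eLpNorm g 1 (volume.restrict (Set.Ioc s t))).toReal := hnorm
    _ ≤ B.toReal * δ ^ θ := hfinal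
    _ ≤ ε := hδε

/-- If F ≥ 0 is locally absolutely continuous, F ∈ Lᵖ([0,∞)), G ∈ Lʳ([0,∞)) and
F'(t) ≤ G(t) a.e., then F(t) → 0 as t → ∞. -/
theorem tendsto_zero_of_memLp (p : ℝ≥0∞) (r : ℝ≥0∞)
    (hp : 1 ≤ p) (hp' : p ≠ ⊤) (hr : 1 ≤ r) (F F' G : ℝ → ℝ)
    (hFpos : ∀ t : ℝ, 0 ≤ t → 0 ≤ F t)
    (hAC : ∀ b : ℝ, 0 < b → ∃ y : ℝ → ℝ, IntegrableOn y (Set.Icc 0 b) ∧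
        ∀ t ∈ Set.Icc (0 : ℝ) b, F t = F 0 + ∫ s in (0 : ℝ)..t, y s)
    (hderiv : ∀ᵐ t ∂volume.restrict (Set.Ici (0 : ℝ)), HasDerivAt F (F' t) t)
    (hF : MemLp F p (volume.restrict (Set.Ici 0)))
    (hG : MemLp G r (volume.restrict (Set.Ici 0)))
    (hle : ∀ᵐ t ∂volume.restrict (Set.Ici (0 : ℝ)), F' t ≤ G t) :
    Tendsto F atTop (nhds 0) := by
  classical
  -- the positive part of G
  set g : ℝ → ℝ := fun u => max (G u) 0 with hgdef
  have hg0 : ∀ u, 0 ≤ g u := fun u => le_max_right _ _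
  have hGg : ∀ u, G u ≤ g u := fun u => le_max_left _ _
  have hgmem : MemLp g r (volume.restrict (Set.Ici 0)) := by
    refine MemLp.of_le hG (hG.1.sup aestronglyMeasurable_const) ?_
    refine Eventually.of_forall fun u => ?_
    rw [Real.norm_eq_abs, Real.norm_eq_abs, abs_of_nonneg (hg0 u)]
    exact max_le (le_abs_self _) (abs_nonneg _)
  -- integrability of g on bounded intervals
  have hgIoc : ∀ s t : ℝ, 0 ≤ s → IntegrableOn g (Set.Ioc s t) volume := by
    intro s t hs
    have hres : (volume.restrict (Set.Ici (0:ℝ))).restrict (Set.Ioc s t)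
        = volume.restrict (Set.Ioc s t) := by
      rw [Measure.restrict_restrict measurableSet_Ioc]
      congr 1
      exact Set.inter_eq_left.mpr fun x hx => hs.trans hx.1.le
    have hgA : MemLp g r (volume.restrict (Set.Ioc s t)) := by
      rw [← hres]; exact hgmem.restrict _
    have hfin : IsFiniteMeasure (volume.restrict (Set.Ioc s t)) := by
      constructor
      rw [Measure.restrict_apply_univ, Real.volume_Ioc]
      exact ENNReal.ofReal_lt_top
    exact memLp_one_iff_integrable.mp (hgA.mono_exponent hr)
  -- the key FTC comparison
  have key : ∀ s t : ℝ, 0 ≤ s → s ≤ t → F t ≤ F s + ∫ u in Set.Ioc s t, g u := by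
    intro s t hs hst
    rcases eq_or_lt_of_le hst with rfl | hlt
    · simp
    have ht : 0 < t := lt_of_le_of_lt hs hlt
    obtain ⟨y, hy, hFeq⟩ := hAC t ht
    have hae := aux_ae_eq_deriv t F F' y hy hFeq
    have hsub : Set.Ioc s t ⊆ Set.Ici (0:ℝ) := fun u hu => hs.trans hu.1.le
    have hyg : ∀ᵐ u ∂volume.restrict (Set.Ioc s t), y u ≤ g u := by
      have h1 := ae_restrict_of_ae_restrict_of_subset hsub hderiv
      have h2 := ae_restrict_of_ae_restrict_of_subset hsub hle
      have h3 : ∀ᵐ u ∂volume.restrict (Set.Ioc s t),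
          u ∈ Set.Ico (0:ℝ) t → HasDerivAt F (F' u) u → y u = F' u :=
        ae_restrict_of_ae hae
      have hne : ∀ᵐ u ∂volume.restrict (Set.Ioc s t), u ≠ t := by
        refine ae_restrict_of_ae ?_
        rw [ae_iff]
        have : {u : ℝ | ¬ u ≠ t} = {t} := by ext u; simp
        rw [this]
        exact measure_singleton t
      filter_upwards [h1, h2, h3, hne, ae_restrict_mem measurableSet_Ioc]
        with u hu1 hu2 hu3 hu4 hu5
      have hmem : u ∈ Set.Ico (0:ℝ) t := ⟨hs.trans hu5.1.le, lt_of_le_of_ne hu5.2 hu4⟩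
      calc y u = F' u := hu3 hmem hu1
        _ ≤ G u := hu2
        _ ≤ g u := hGg u
    have hyint : IntegrableOn y (Set.Ioc s t) volume :=
      hy.mono_set fun u hu => ⟨hs.trans hu.1.le, hu.2⟩
    have hint : ∫ u in Set.Ioc s t, y u ≤ ∫ u in Set.Ioc s t, g u :=
      integral_mono_ae hyint (hgIoc s t hs) hyg
    have hFt := hFeq t ⟨ht.le, le_refl t⟩
    have hFs := hFeq s ⟨hs, hst⟩
    have hi1 : IntervalIntegrable y volume 0 t := by
      apply IntegrableOn.intervalIntegrable
      rw [Set.uIcc_of_le ht.le]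
      exact hy
    have hi2 : IntervalIntegrable y volume 0 s := by
      apply IntegrableOn.intervalIntegrable
      rw [Set.uIcc_of_le hs]
      exact hy.mono_set (Set.Icc_subset_Icc_right hst)
    have hdiff : F t - F s = ∫ u in Set.Ioc s t, y u := by
      rw [hFt, hFs, add_sub_add_left_eq_sub,
        intervalIntegral.integral_interval_sub_left hi1 hi2,
        intervalIntegral.integral_of_le hst]
    linarith
  -- smallness of the integral of g over short far-out intervals
  have hsmall : ∀ ε : ℝ, 0 < ε → ∃ δ T₀ : ℝ, 0 < δ ∧ δ ≤ 1 ∧ 0 ≤ T₀ ∧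
      ∀ s t, T₀ ≤ s → s ≤ t → t ≤ s + δ → ∫ u in Set.Ioc s t, g u ≤ ε := by
    intro ε hε
    rcases eq_or_lt_of_le hr with hr1 | hr1
    · -- r = 1
      have hint : IntegrableOn g (Set.Ici 0) volume :=
        memLp_one_iff_integrable.mp (hr1 ▸ hgmem)
      obtain ⟨T, hT0, hTε⟩ := aux_tail_small g hint (fun u => hg0 u) hε
      refine ⟨1, T, one_pos, le_refl 1, hT0, fun s t hTs hst _ => ?_⟩
      refine le_trans ?_ hTε
      refine setIntegral_mono_set (hint.mono_set fun u hu => hT0.trans hu.le)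
        (Eventually.of_forall fun u => hg0 u) ?_
      exact (HasSubset.Subset.eventuallyLE fun u hu => lt_of_le_of_lt hTs hu.1)
    · obtain ⟨δ, h1, h2, h3⟩ := aux_holder r hr1 g hgmem hε
      exact ⟨δ, 0, h1, h2, le_refl 0, fun s t hs => h3 s t hs⟩
  -- integrability of |F| ^ p.toReal
  set pr : ℝ := p.toReal with hprdef
  have hp0 : p ≠ 0 := fun h => by simp [h] at hp
  have hpr0 : 0 < pr := ENNReal.toReal_pos hp0 hp'
  have hφ : IntegrableOn (fun u => |F u| ^ pr) (Set.Ici 0) volume := by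
    have := hF.integrable_norm_rpow hp0 hp'
    simpa [Real.norm_eq_abs, hprdef, IntegrableOn] using this
  -- main argument
  rw [Metric.tendsto_atTop]
  intro ε hε
  obtain ⟨δ, T₀, hδ0, hδ1, hT₀, hsm⟩ := hsmall (ε/2) (half_pos hε)
  set c : ℝ := (ε/2) ^ pr with hcdef
  have hc : 0 < c := Real.rpow_pos_of_pos (half_pos hε) _
  obtain ⟨T₁, hT₁0, hT₁⟩ := aux_tail_small (fun u => |F u| ^ pr) hφ
    (fun u => Real.rpow_nonneg (abs_nonneg _) _)
    (show (0:ℝ) < c * δ / 2 by positivity)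
  refine ⟨max T₀ T₁ + 1, fun t₀ ht₀ => ?_⟩
  have ht₀T : max T₀ T₁ + 1 ≤ t₀ := ht₀
  have ht₀0 : 0 ≤ t₀ := by
    have := le_max_left T₀ T₁
    linarith [hT₀]
  rw [Real.dist_eq, sub_zero, abs_of_nonneg (hFpos t₀ ht₀0)]
  by_contra hcon
  push_neg at hcon
  -- F is at least ε/2 on [t₀ - δ, t₀]
  have hlow : ∀ s ∈ Set.Icc (t₀ - δ) t₀, ε/2 ≤ F s := by
    intro s hs
    have hs0 : 0 ≤ s := by
      have := le_max_left T₀ T₁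
      have := hs.1
      linarith [hT₀]
    have hT₀s : T₀ ≤ s := by
      have := le_max_left T₀ T₁
      have := hs.1
      linarith
    have h1 := key s t₀ hs0 hs.2
    have h2 := hsm s t₀ hT₀s hs.2 (by linarith [hs.1])
    linarith
  -- lower bound for the tail integral
  have hIsub : Set.Ioc (t₀ - δ) t₀ ⊆ Set.Ioi T₁ := by
    intro u hu
    have := le_max_right T₀ T₁
    have : T₁ ≤ t₀ - δ := by linarith
    exact lt_of_le_of_lt this hu.1
  have h1 : c * δ ≤ ∫ u in Set.Ioc (t₀ - δ) t₀, |F u| ^ pr := by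
    have := setIntegral_ge_of_const_le (μ := volume) (s := Set.Ioc (t₀ - δ) t₀)
      (f := fun u => |F u| ^ pr) (c := c) measurableSet_Ioc
      (by rw [Real.volume_Ioc]; exact ENNReal.ofReal_ne_top)
      (fun u hu => by
        have hu' : u ∈ Set.Icc (t₀ - δ) t₀ := ⟨hu.1.le, hu.2⟩
        have hF2 := hlow u hu'
        show c ≤ |F u| ^ pr
        rw [hcdef]
        refine Real.rpow_le_rpow (half_pos hε).le ?_ hpr0.le
        rw [abs_of_nonneg ((half_pos hε).le.trans hF2)]
        exact hF2)
      (hφ.mono_set fun u hu => hT₁0.trans (hIsub hu).le)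
    rw [Real.volume_real_Ioc_of_le (by linarith : t₀ - δ ≤ t₀)] at this
    calc c * δ = c * (t₀ - (t₀ - δ)) := by ring_nf
      _ ≤ _ := by rw [smul_eq_mul, mul_comm] at this; exact this
  have h2 : ∫ u in Set.Ioc (t₀ - δ) t₀, |F u| ^ pr ≤ ∫ u in Set.Ioi T₁, |F u| ^ pr := by
    refine setIntegral_mono_set (hφ.mono_set fun u hu => hT₁0.trans hu.le)
      (Eventually.of_forall fun u => Real.rpow_nonneg (abs_nonneg _) _) ?_
    exact HasSubset.Subset.eventuallyLE hIsub
  have : c * δ ≤ c * δ / 2 := by linarith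
  have hpos : 0 < c * δ := mul_pos hc hδ0
  linarith
end

section
/- Let B : H → H be β-cocoercive with β > 0 and zer B ≠ ∅, and let x : [0,∞) → H be a C² solution of ẍ(t) + γ(t)ẋ(t) + λ(t)B(x(t)) = 0, where λ, γ : [0,∞) → (0,∞) are locally absolutely continuous with γ̇(t) ≤ 0 ≤ λ̇(t) and γ(t)²/λ(t) ≥ (1+θ)/β for some θ > 0, for almost every t. Fix x* ∈ zer B and set h(t) = (1/2)‖x(t) − x*‖². Then for almost every t ≥ 0: ḧ(t) + (d/dt)(γh)(t) + β(d/dt)(γ(t)/λ(t)·‖ẋ(t)‖²) + θ‖ẋ(t)‖² + (β/λ̄)‖ẍ(t)‖² ≤ 0, where λ̄ is any upper bound of λ. -/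
open MeasureTheory
open scoped RealInnerProductSpace

set_option maxHeartbeats 1000000 in
/-- Key energy inequality in the proof of Theorem 5: along a C² solution of
ẍ + γẋ + λB(x) = 0 with B β-cocoercive, for a.e. t ≥ 0 one has
ḧ(t) + (γh)'(t) + β·(γ/λ·‖ẋ‖²)'(t) + θ‖ẋ(t)‖² + (β/λ̄)‖ẍ(t)‖² ≤ 0,
where h(t) = ½‖x(t) − x*‖². -/
theorem energy_inequality {H : Type*} [NormedAddCommGroup H] [InnerProductSpace ℝ H]
    (B : H → H) (β θ lambdaBar : ℝ) (hβ : 0 < β) (hθ : 0 < θ) (hlbar : 0 < lambdaBar)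
    (hcoco : ∀ u v : H, β * ‖B u - B v‖ ^ 2 ≤ ⟪u - v, B u - B v⟫)
    (xstar : H) (hzero : B xstar = 0)
    (lam γ lam' γ' : ℝ → ℝ)
    (hpos : ∀ t : ℝ, 0 ≤ t → 0 < lam t ∧ 0 < γ t)
    (hub : ∀ t : ℝ, 0 ≤ t → lam t ≤ lambdaBar)
    (hlamAC : ∀ᵐ t ∂volume.restrict (Set.Ici (0 : ℝ)), HasDerivAt lam (lam' t) t)
    (hγAC : ∀ᵐ t ∂volume.restrict (Set.Ici (0 : ℝ)), HasDerivAt γ (γ' t) t)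
    (hsign : ∀ᵐ t ∂volume.restrict (Set.Ici (0 : ℝ)), γ' t ≤ 0 ∧ 0 ≤ lam' t)
    (hratio : ∀ᵐ t ∂volume.restrict (Set.Ici (0 : ℝ)), (1 + θ) / β ≤ γ t ^ 2 / lam t)
    (x x' x'' : ℝ → H)
    (hx : ∀ t : ℝ, HasDerivAt x (x' t) t)
    (hx' : ∀ t : ℝ, HasDerivAt x' (x'' t) t)
    (hode : ∀ t : ℝ, 0 ≤ t → x'' t + γ t • x' t + lam t • B (x t) = 0)
    (gh' q' : ℝ → ℝ)
    (hgh : ∀ᵐ t ∂volume.restrict (Set.Ici (0 : ℝ)),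
        HasDerivAt (fun s => γ s * ((1 / 2) * ‖x s - xstar‖ ^ 2)) (gh' t) t)
    (hq : ∀ᵐ t ∂volume.restrict (Set.Ici (0 : ℝ)),
        HasDerivAt (fun s => γ s / lam s * ‖x' s‖ ^ 2) (q' t) t) :
    ∀ᵐ t ∂volume.restrict (Set.Ici (0 : ℝ)),
      (‖x' t‖ ^ 2 + ⟪x t - xstar, x'' t⟫) + gh' t + β * q' t +
          θ * ‖x' t‖ ^ 2 + (β / lambdaBar) * ‖x'' t‖ ^ 2 ≤ 0 := by
  filter_upwards [hγAC, hlamAC, hsign, hratio, hgh, hq,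
    ae_restrict_mem measurableSet_Ici] with t hγt hlamt hsg hrt hght hqt ht
  obtain ⟨hl, hg⟩ := hpos t ht
  set A := ‖x' t‖ ^ 2 with hA
  set C := ‖x'' t‖ ^ 2 with hC
  set P := (⟪x' t, x'' t⟫ : ℝ) with hP
  set D := (⟪x t - xstar, x' t⟫ : ℝ) with hD
  set E := (⟪x t - xstar, B (x t)⟫ : ℝ) with hE
  set N := ‖B (x t)‖ ^ 2 with hN
  set g := γ t
  set l := lam t
  have hA0 : 0 ≤ A := sq_nonneg _
  have hC0 : 0 ≤ C := sq_nonneg _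
  -- derivative of h
  have hxs : HasDerivAt (fun s => x s - xstar) (x' t) t := (hx t).sub_const _
  have hin : HasDerivAt (fun s => (⟪x s - xstar, x s - xstar⟫ : ℝ))
      (⟪x t - xstar, x' t⟫ + ⟪x' t, x t - xstar⟫) t := hxs.inner ℝ hxs
  have hh : HasDerivAt (fun s => (1 / 2 : ℝ) * ‖x s - xstar‖ ^ 2) D t := by
    have h2 := hin.const_mul (1 / 2 : ℝ)
    simp only [real_inner_self_eq_norm_sq] at h2
    have : (1 / 2 : ℝ) * (⟪x t - xstar, x' t⟫ + ⟪x' t, x t - xstar⟫) = D := by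
      have hc : (⟪x' t, x t - xstar⟫ : ℝ) = D := by
        rw [hD]; first | exact real_inner_comm _ _ | exact (real_inner_comm _ _).symm
      linarith [hc, hD]
    rwa [this] at h2
  have hghd : HasDerivAt (fun s => γ s * ((1 / 2 : ℝ) * ‖x s - xstar‖ ^ 2))
      (γ' t * ((1 / 2 : ℝ) * ‖x t - xstar‖ ^ 2) + g * D) t := hγt.mul hh
  have hgh_eq : gh' t = γ' t * ((1 / 2 : ℝ) * ‖x t - xstar‖ ^ 2) + g * D :=
    hght.unique hghd
  -- derivative of q
  have hin' : HasDerivAt (fun s => (⟪x' s, x' s⟫ : ℝ))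
      (⟪x' t, x'' t⟫ + ⟪x'' t, x' t⟫) t := (hx' t).inner ℝ (hx' t)
  have hns : HasDerivAt (fun s => ‖x' s‖ ^ 2) (2 * P) t := by
    simp only [real_inner_self_eq_norm_sq] at hin'
    have : (⟪x' t, x'' t⟫ : ℝ) + ⟪x'' t, x' t⟫ = 2 * P := by
      have hc : (⟪x'' t, x' t⟫ : ℝ) = P := by
        rw [hP]; first | exact real_inner_comm _ _ | exact (real_inner_comm _ _).symm
      linarith [hc, hP]
    rwa [this] at hin'
  have hdiv : HasDerivAt (fun s => γ s / lam s)
      ((γ' t * l - g * lam' t) / l ^ 2) t := hγt.div hlamt hl.ne'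
  have hqd : HasDerivAt (fun s => γ s / lam s * ‖x' s‖ ^ 2)
      ((γ' t * l - g * lam' t) / l ^ 2 * A + g / l * (2 * P)) t := hdiv.mul hns
  have hq_eq : q' t = (γ' t * l - g * lam' t) / l ^ 2 * A + g / l * (2 * P) :=
    hqt.unique hqd
  -- ODE consequences
  have hodet := hode t ht
  have hI : (⟪x t - xstar, x'' t⟫ : ℝ) = -(g * D) - l * E := by
    have h0 : (⟪x t - xstar, x'' t + γ t • x' t + lam t • B (x t)⟫ : ℝ) = 0 := by
      rw [hodet, inner_zero_right]
    simp only [inner_add_right, inner_smul_right, real_inner_smul_right] at h0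
    rw [← hD, ← hE] at h0
    linarith
  have hBx : lam t • B (x t) = -(x'' t + γ t • x' t) :=
    eq_neg_of_add_eq_zero_right hodet
  have hNsq : l ^ 2 * N = C + 2 * (g * P) + g ^ 2 * A := by
    have h1 : ‖lam t • B (x t)‖ ^ 2 = ‖x'' t + γ t • x' t‖ ^ 2 := by
      rw [hBx, norm_neg]
    rw [norm_smul, norm_add_sq_real, real_inner_smul_right, norm_smul] at h1
    simp only [Real.norm_eq_abs, abs_of_pos hl, abs_of_pos hg, mul_pow] at h1
    have hc : (⟪x'' t, x' t⟫ : ℝ) = P := by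
      rw [hP]; first | exact real_inner_comm _ _ | exact (real_inner_comm _ _).symm
    rw [hc, ← hA, ← hC, ← hN] at h1
    have e1 : |lam t| ^ 2 = l ^ 2 := sq_abs _
    have e2 : |γ t| ^ 2 = g ^ 2 := sq_abs _
    rw [e1, e2] at h1
    linarith [h1]
  have hcE : β * N ≤ E := by
    have h2 := hcoco (x t) xstar
    rwa [hzero, sub_zero] at h2
  -- key bounds
  have h1 : gh' t ≤ g * D := by
    rw [hgh_eq]
    have : γ' t * ((1 / 2 : ℝ) * ‖x t - xstar‖ ^ 2) ≤ 0 :=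
      mul_nonpos_of_nonpos_of_nonneg hsg.1 (by positivity)
    linarith
  have h2 : β * q' t ≤ 2 * β * g * P / l := by
    rw [hq_eq]
    have hnum : γ' t * l - g * lam' t ≤ 0 := by
      nlinarith [hsg.1, hsg.2, hl, hg]
    have hd : (γ' t * l - g * lam' t) / l ^ 2 ≤ 0 :=
      div_nonpos_of_nonpos_of_nonneg hnum (sq_nonneg _)
    have hterm : β * ((γ' t * l - g * lam' t) / l ^ 2 * A) ≤ 0 :=
      mul_nonpos_of_nonneg_of_nonpos hβ.le (mul_nonpos_of_nonpos_of_nonneg hd hA0)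
    have hsplit : β * ((γ' t * l - g * lam' t) / l ^ 2 * A + g / l * (2 * P))
        = β * ((γ' t * l - g * lam' t) / l ^ 2 * A) + 2 * β * g * P / l := by ring
    rw [hsplit]
    linarith [hterm]
  have h4 : β * C / l + 2 * β * g * P / l + β * g ^ 2 * A / l ≤ l * E := by
    have h5' : l * (β * N) ≤ l * E := by
      have := mul_le_mul_of_nonneg_left hcE hl.le
      linarith
    have heq : β * C / l + 2 * β * g * P / l + β * g ^ 2 * A / l = l * (β * N) := by
      have : β * C / l + 2 * β * g * P / l + β * g ^ 2 * A / l
          = β * (C + 2 * (g * P) + g ^ 2 * A) / l := by ring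
      rw [this, ← hNsq, div_eq_iff hl.ne']
      ring
    linarith
  have h5 : (1 + θ) * A ≤ β * g ^ 2 * A / l := by
    rw [div_le_div_iff₀ hβ hl] at hrt
    rw [le_div_iff₀ hl]
    nlinarith [hA0]
  have h6 : β / lambdaBar * C ≤ β * C / l := by
    have : β / lambdaBar ≤ β / l :=
      div_le_div_of_nonneg_left hβ.le hl (hub t ht)
    have := mul_le_mul_of_nonneg_right this hC0
    calc β / lambdaBar * C ≤ β / l * C := this
      _ = β * C / l := by ring
  rw [hI]
  linarith
end

section
/- Let g : H → ℝ be convex and Fréchet differentiable with (1/β)-Lipschitz gradient for β > 0, x* a minimizer of g, x : [0,∞) → H a C² solution of ẍ(t) + γ(t)ẋ(t) + λ(t)∇g(x(t)) = 0 with γ twice differentiable and γ̇ ≤ 0, 2γ̇(t)γ(t) − γ̈(t) ≤ 0 and γ(t)λ(t) − λ̇(t) ≥ ζ > 0 for a.e. t. Then for a.e. t ≥ 0: (d/dt)[ (1/2)‖ẋ(t) + γ(t)(x(t)−x*)‖² + λ(t)g(x(t)) − (γ̇(t)/2)‖x(t)−x*‖² ] ≤ −ζ(g(x(t)) − g(x*))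 + λ̇(t)g(x*). -/
open MeasureTheory
open scoped RealInnerProductSpace

/-- Energy decay estimate along a C² solution of ẍ + γẋ + λ∇g(x) = 0: for a.e. t ≥ 0,
(d/dt)[½‖ẋ + γ(x − x*)‖² + λ·g(x) − (γ̇/2)‖x − x*‖²] ≤ −ζ(g(x) − g(x*)) + λ̇·g(x*). -/
theorem energy_decay_gradient {H : Type*} [NormedAddCommGroup H] [InnerProductSpace ℝ H]
    [CompleteSpace H]
    (g : H → ℝ) (Dg : H → H) (β ζ : ℝ) (hβ : 0 < β) (hζ : 0 < ζ)
    (hconv : ConvexOn ℝ Set.univ g)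
    (hgrad : ∀ u : H, HasGradientAt g (Dg u) u)
    (hlip : ∀ u v : H, ‖Dg u - Dg v‖ ≤ (1 / β) * ‖u - v‖)
    (xstar : H) (hmin : ∀ u : H, g xstar ≤ g u)
    (lam γ lam' γ' γ'' : ℝ → ℝ)
    (hpos : ∀ t : ℝ, 0 ≤ t → 0 < lam t ∧ 0 < γ t)
    (hγd : ∀ t : ℝ, HasDerivAt γ (γ' t) t)
    (hγd2 : ∀ t : ℝ, HasDerivAt γ' (γ'' t) t)
    (hlamAC : ∀ᵐ t ∂volume.restrict (Set.Ici (0 : ℝ)), HasDerivAt lam (lam' t) t)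
    (hγsign : ∀ᵐ t ∂volume.restrict (Set.Ici (0 : ℝ)), γ' t ≤ 0)
    (hγ2 : ∀ᵐ t ∂volume.restrict (Set.Ici (0 : ℝ)), 2 * γ' t * γ t - γ'' t ≤ 0)
    (hζineq : ∀ᵐ t ∂volume.restrict (Set.Ici (0 : ℝ)), ζ ≤ γ t * lam t - lam' t)
    (x x' x'' : ℝ → H)
    (hx : ∀ t : ℝ, HasDerivAt x (x' t) t)
    (hx' : ∀ t : ℝ, HasDerivAt x' (x'' t) t)
    (hode : ∀ t : ℝ, 0 ≤ t → x'' t + γ t • x' t + lam t • Dg (x t) = 0)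
    (E' : ℝ → ℝ)
    (hE : ∀ᵐ t ∂volume.restrict (Set.Ici (0 : ℝ)),
        HasDerivAt (fun s => (1 / 2) * ‖x' s + γ s • (x s - xstar)‖ ^ 2 +
          lam s * g (x s) - γ' s / 2 * ‖x s - xstar‖ ^ 2) (E' t) t) :
    ∀ᵐ t ∂volume.restrict (Set.Ici (0 : ℝ)),
      E' t ≤ -ζ * (g (x t) - g xstar) + lam' t * g xstar := by
  -- convexity gap inequality
  have gap : ∀ u : H, g u - g xstar ≤ ⟪Dg u, u - xstar⟫ := by
    intro u
    set L : ℝ →ᵃ[ℝ] H := AffineMap.lineMap u xstar with hL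
    have hφ : ConvexOn ℝ Set.univ (g ∘ L) := by
      have := hconv.comp_affineMap L
      simpa using this
    have hLd : HasDerivAt (fun s : ℝ => L s) (xstar - u) 0 := by
      have : HasDerivAt (fun s : ℝ => s • (xstar - u) + u) (xstar - u) 0 := by
        simpa using ((hasDerivAt_id (0 : ℝ)).smul_const (xstar - u)).add_const u
      simpa [hL, AffineMap.lineMap_apply] using this
    have hder : HasDerivAt (g ∘ L) ⟪Dg u, xstar - u⟫ 0 := by
      have h0 : L (0 : ℝ) = u := by simp [hL]
      have := (hgrad (L 0)).hasFDerivAt.comp_hasDerivAt 0 hLd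
      simpa [h0] using this
    have hs := hφ.le_slope_of_hasDerivAt (Set.mem_univ (0 : ℝ)) (Set.mem_univ 1) one_pos hder
    have hslope : slope (g ∘ L) 0 1 = g xstar - g u := by
      simp [slope, hL, AffineMap.lineMap_apply]
    rw [hslope] at hs
    have : ⟪Dg u, xstar - u⟫ = -⟪Dg u, u - xstar⟫ := by
      rw [← inner_neg_right]; simp
    linarith [hs, this.symm ▸ hs]
  have hmem : ∀ᵐ t ∂volume.restrict (Set.Ici (0 : ℝ)), t ∈ Set.Ici (0 : ℝ) :=
    ae_restrict_mem measurableSet_Ici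
  filter_upwards [hmem, hlamAC, hγsign, hγ2, hζineq, hE] with t ht hlamt hγs hγ2t hζt hEt
  have hgc : HasDerivAt (fun u => g (x u)) ⟪Dg (x t), x' t⟫ t := by
    have := (hgrad (x t)).hasFDerivAt.comp_hasDerivAt t (hx t)
    simp at this; exact this
  have hxm : ∀ s : ℝ, HasDerivAt (fun u => x u - xstar) (x' s) s := fun s =>
    (hx s).sub_const xstar
  have hv : HasDerivAt (fun s => x' s + γ s • (x s - xstar))
      (x'' t + (γ t • x' t + γ' t • (x t - xstar))) t :=
    (hx' t).add ((hγd t).smul (hxm t))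
  have h1 : HasDerivAt (fun s => (1 / 2 : ℝ) *
      ⟪x' s + γ s • (x s - xstar), x' s + γ s • (x s - xstar)⟫)
      ((1 / 2) * (⟪x' t + γ t • (x t - xstar), x'' t + (γ t • x' t + γ' t • (x t - xstar))⟫ +
        ⟪x'' t + (γ t • x' t + γ' t • (x t - xstar)), x' t + γ t • (x t - xstar)⟫)) t :=
    (hv.inner ℝ hv).const_mul _
  have h2 : HasDerivAt (fun s => lam s * g (x s))
      (lam' t * g (x t) + lam t * ⟪Dg (x t), x' t⟫) t := hlamt.mul hgc
  have h3 : HasDerivAt (fun s => γ' s / 2 * ⟪x s - xstar, x s - xstar⟫)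
      (γ'' t / 2 * ⟪x t - xstar, x t - xstar⟫ +
        γ' t / 2 * (⟪x t - xstar, x' t⟫ + ⟪x' t, x t - xstar⟫)) t :=
    ((hγd2 t).div_const 2).mul ((hxm t).inner ℝ (hxm t))
  have hEtot := (h1.add h2).sub h3
  have hfuneq : (fun s => (1 / 2 : ℝ) *
      ⟪x' s + γ s • (x s - xstar), x' s + γ s • (x s - xstar)⟫ +
      lam s * g (x s) - γ' s / 2 * ⟪x s - xstar, x s - xstar⟫) =
      (fun s => (1 / 2 : ℝ) * ‖x' s + γ s • (x s - xstar)‖ ^ 2 +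
      lam s * g (x s) - γ' s / 2 * ‖x s - xstar‖ ^ 2) := by
    funext s; rw [real_inner_self_eq_norm_sq, real_inner_self_eq_norm_sq]
  rw [← hfuneq] at hEt
  have hEeq := hEt.unique hEtot
  have hxx : x'' t = -(γ t • x' t + lam t • Dg (x t)) := by
    have h := hode t ht
    rw [add_assoc] at h
    exact eq_neg_of_add_eq_zero_left h
  have key : E' t = -(lam t * γ t) * ⟪Dg (x t), x t - xstar⟫ +
      (γ t * γ' t - γ'' t / 2) * ⟪x t - xstar, x t - xstar⟫ + lam' t * g (x t) := by
    rw [hEeq, hxx]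
    simp only [inner_add_left, inner_add_right, inner_neg_left, inner_neg_right,
      inner_smul_left, inner_smul_right, RCLike.conj_to_real, real_inner_comm (x' t) (x t - xstar),
      real_inner_comm (Dg (x t)) (x' t)]
    rw [real_inner_comm (x t - xstar) (Dg (x t))]
    ring
  have hn : (0 : ℝ) ≤ ⟪x t - xstar, x t - xstar⟫ := real_inner_self_nonneg
  have hgap := gap (x t)
  have hgm := hmin (x t)
  have hlp := (hpos t ht).1
  have hgp := (hpos t ht).2
  rw [key]
  have h2γ : γ t * γ' t - γ'' t / 2 ≤ 0 := by linarith
  have hlg : 0 < lam t * γ t := mul_pos hlp hgp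
  nlinarith [mul_nonneg (neg_nonneg.mpr h2γ) hn, mul_le_mul_of_nonneg_left hgap (le_of_lt hlg),
    mul_nonneg (sub_nonneg.mpr hgm) (sub_nonneg.mpr (by linarith [hζt] : ζ ≤ lam t * γ t - lam' t))]
end
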